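/- Let 0 < β < γ and 0 < c < β/(γ−β), and set p := β/(γ−β). Define V : (0,∞)² → ℝ by V(x¹,x²) := x¹·[ 1 − ( γc(1 + x²/x¹)/(β+βc) )^{−p} · (1+c)(γ−β)/γ ]. Then V has partial derivatives at every point of (0,∞)², and for all x¹, x² > 0 the first-order Bellman identity holds: β x¹x²/(x¹+x²) + (∂V/∂x¹)(x¹,x²)·( −β x¹x²/(x¹+x²) ) + (∂V/∂x²)(x¹,x²)·( β x¹x²/(x¹+x²) − γ x² ) = 0. -/

import Mathlib

/-- Let `0 < β < γ`, `0 < c < β/(γ−β)`, `p := β/(γ−β)`, and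
`V(x¹,x²) := x¹[1 − (γc(1 + x²/x¹)/(β+βc))^{−p}·(1+c)(γ−β)/γ]` on `(0,∞)²`.  Then `V`
has partial derivatives at every point of `(0,∞)²` and the first-order Bellman identity
`βx¹x²/(x¹+x²) + ∂₁V·(−βx¹x²/(x¹+x²)) + ∂₂V·(βx¹x²/(x¹+x²) − γx²) = 0` holds. -/
theorem stmt_17 (β γ c : ℝ) (hβ : 0 < β) (hβγ : β < γ) (hc0 : 0 < c)
    (hc : c < β / (γ - β)) :
    ∀ x1 x2 : ℝ, 0 < x1 → 0 < x2 →
      ∃ d1 d2 : ℝ,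
        HasDerivAt (fun y : ℝ => y * (1 -
          (γ * c * (1 + x2 / y) / (β + β * c)) ^ (-(β / (γ - β))) *
          ((1 + c) * (γ - β) / γ))) d1 x1 ∧
        HasDerivAt (fun y : ℝ => x1 * (1 -
          (γ * c * (1 + y / x1) / (β + β * c)) ^ (-(β / (γ - β))) *
          ((1 + c) * (γ - β) / γ))) d2 x2 ∧
        β * (x1 * x2) / (x1 + x2) + d1 * (-(β * (x1 * x2) / (x1 + x2))) +
          d2 * (β * (x1 * x2) / (x1 + x2) - γ * x2) = 0 := by
  intro x1 x2 hx1 hx2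
  have hγ : 0 < γ := hβ.trans hβγ
  have hγβ : 0 < γ - β := sub_pos.mpr hβγ
  have hden : 0 < β + β * c := by positivity
  set e : ℝ := -(β / (γ - β)) with he
  set K : ℝ := (1 + c) * (γ - β) / γ with hK
  set z : ℝ := γ * c * (1 + x2 * x1⁻¹) / (β + β * c) with hz
  have hzpos : 0 < z := by
    have h1 : 0 < 1 + x2 * x1⁻¹ := by positivity
    rw [hz]; positivity
  -- derivative in first variable
  have hb1 : HasDerivAt (fun y : ℝ => γ * c * (1 + x2 * y⁻¹) / (β + β * c))
      (γ * c * (x2 * -(x1 ^ 2)⁻¹) / (β + β * c)) x1 :=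
    ((((hasDerivAt_inv hx1.ne').const_mul x2).const_add 1).const_mul (γ * c)).div_const _
  have H1 := ((hasDerivAt_id x1).mul
    (((hb1.rpow_const (p := e) (Or.inl hzpos.ne')).mul_const K).const_sub 1))
  -- derivative in second variable
  have hb2 : HasDerivAt (fun y : ℝ => γ * c * (1 + y * x1⁻¹) / (β + β * c))
      (γ * c * (1 * x1⁻¹) / (β + β * c)) x2 := by
    exact ((((hasDerivAt_id x2).mul_const x1⁻¹).const_add 1).const_mul (γ * c)).div_const _
  have hz2 : γ * c * (1 + x2 * x1⁻¹) / (β + β * c) = z := rfl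
  have H2 := (((hb2.rpow_const (p := e) (Or.inl (by rw [hz2]; exact hzpos.ne'))).mul_const
      K).const_sub 1).const_mul x1
  refine ⟨1 * (1 - (γ * c * (1 + x2 * x1⁻¹) / (β + β * c)) ^ e * K) +
      x1 * -(γ * c * (x2 * -(x1 ^ 2)⁻¹) / (β + β * c) * e *
        (γ * c * (1 + x2 * x1⁻¹) / (β + β * c)) ^ (e - 1) * K),
    x1 * -(γ * c * (1 * x1⁻¹) / (β + β * c) * e *
        (γ * c * (1 + x2 * x1⁻¹) / (β + β * c)) ^ (e - 1) * K), ?_, ?_, ?_⟩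
  · simpa only [div_eq_mul_inv, id_eq, Pi.mul_def] using H1
  · simpa only [div_eq_mul_inv, id_eq] using H2
  -- the Bellman identity
  · rw [hz2]
    have key : z ^ e = z ^ (e - 1) * z := by
      rw [← Real.rpow_add_one hzpos.ne', sub_add_cancel]
    rw [key]
    have hzz : 0 < γ * c * (1 + x2 * x1⁻¹) := by positivity
    have hz' : z = γ * c * (1 + x2 * x1⁻¹) / (β + β * c) := rfl
    generalize z ^ (e - 1) = t
    rw [hz', hK, he]
    field_simp
    ring
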